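/- Let G be a connected graph (or digraph) and n ≥ 1, and let n·G be the disjoint union of n copies of G. For φ ∈ Aut(G), let φ ⊕ id denote the automorphism of n·G acting by φ on the first copy and trivially on the others. Then for all φ, ψ ∈ Aut(G): φ and ψ are conjugate in Aut(G) if and only if φ ⊕ id and ψ ⊕ id are conjugate in Aut(n·G). -/

import Mathlib

/-- The disjoint union `n·G` of `n` copies of the graph `G`, on vertex set `Fin n × V`. -/
def nCopies {V : Type} (G : SimpleGraph V) (n : ℕ) : SimpleGraph (Fin n × V) where
  Adj p q := p.1 = q.1 ∧ G.Adj p.2 q.2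
  symm := by constructor; intro p q h; exact ⟨h.1.symm, h.2.symm⟩
  loopless := by constructor; intro p h; exact G.irrefl h.2

/-- `φ ⊕ id`: the automorphism of `n·G` acting by `φ` on the first copy (index `0`)
and trivially on the other copies. -/
def oplusId {V : Type} {G : SimpleGraph V} {n : ℕ} [NeZero n] (φ : G ≃g G) :
    nCopies G n ≃g nCopies G n where
  toFun p := (p.1, if p.1 = 0 then φ p.2 else p.2)
  invFun p := (p.1, if p.1 = 0 then φ.symm p.2 else p.2)
  left_inv := by
    rintro ⟨i, x⟩
    by_cases h : i = 0 <;> simp [h]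
  right_inv := by
    rintro ⟨i, x⟩
    by_cases h : i = 0 <;> simp [h]
  map_rel_iff' := by
    rintro ⟨i, x⟩ ⟨j, y⟩
    by_cases h : i = 0 <;> by_cases h' : j = 0 <;>
      simp_all [nCopies, SimpleGraph.Adj]
    · exact φ.map_rel_iff
    · rintro rfl; exact absurd rfl h'

lemma fst_const {V : Type} {G : SimpleGraph V} {n : ℕ} (hG : G.Connected)
    (e : nCopies G n ≃g nCopies G n) (i : Fin n) (x y : V) :
    (e (i, x)).1 = (e (i, y)).1 := by
  obtain ⟨w⟩ := hG.preconnected x y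
  induction w with
  | nil => rfl
  | @cons a b c h p ih =>
    have hadj : (nCopies G n).Adj (i, a) (i, b) := ⟨rfl, h⟩
    exact (e.map_rel_iff.mpr hadj).1.trans ih

theorem stmt12 {V : Type} (G : SimpleGraph V) (hG : G.Connected) (n : ℕ) [NeZero n]
    (φ ψ : G ≃g G) :
    (∃ δ : G ≃g G, ∀ x, δ (φ x) = ψ (δ x)) ↔
    (∃ Δ : nCopies G n ≃g nCopies G n,
      ∀ p, Δ ((oplusId φ) p) = (oplusId ψ) (Δ p)) := by
  constructor
  · rintro ⟨δ, hδ⟩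
    refine ⟨oplusId δ, ?_⟩
    rintro ⟨i, x⟩
    by_cases h : i = 0 <;> simp [oplusId, h, hδ]
  · rintro ⟨Δ, hΔ⟩
    obtain ⟨x₀⟩ := hG.nonempty
    set j := (Δ (0, x₀)).1 with hj
    have hfst : ∀ x : V, (Δ (0, x)).1 = j := fun x => fst_const hG Δ 0 x x₀
    have hop : ∀ x : V, (oplusId φ : nCopies G n ≃g nCopies G n) (0, x) = (0, φ x) := by
      intro x; simp [oplusId]
    by_cases hj0 : j = 0
    · -- Δ maps copy 0 to copy 0
      have hpair : ∀ x : V, Δ (0, x) = (0, (Δ (0, x)).2) := fun x =>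
        Prod.ext ((hfst x).trans hj0) rfl
      -- invariants for Δ.symm
      have hsymmfst : ∀ y : V, (Δ.symm (0, y)).1 = 0 := by
        intro y
        have h1 : (Δ.symm (0, (Δ (0, x₀)).2)).1 = 0 := by
          rw [← hpair x₀, Δ.symm_apply_apply]
        exact (fst_const hG Δ.symm 0 y (Δ (0, x₀)).2).trans h1
      have hsymmpair : ∀ y : V, Δ.symm (0, y) = (0, (Δ.symm (0, y)).2) := fun y =>
        Prod.ext (hsymmfst y) rfl
      refine ⟨⟨⟨fun x => (Δ (0, x)).2, fun y => (Δ.symm (0, y)).2, ?_, ?_⟩, ?_⟩, ?_⟩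
      · intro x
        show (Δ.symm (0, (Δ (0, x)).2)).2 = x
        rw [← hpair x, Δ.symm_apply_apply]
      · intro y
        show (Δ (0, (Δ.symm (0, y)).2)).2 = y
        conv_lhs => rw [← hsymmpair y]
        rw [Δ.apply_symm_apply]
      · intro a b
        show G.Adj (Δ (0, a)).2 (Δ (0, b)).2 ↔ G.Adj a b
        constructor
        · intro h
          have hadj : (nCopies G n).Adj (Δ (0, a)) (Δ (0, b)) :=
            ⟨(hfst a).trans (hfst b).symm, h⟩
          exact (Δ.map_rel_iff.mp hadj).2
        · intro h
          have hadj : (nCopies G n).Adj ((0 : Fin n), a) (0, b) := ⟨rfl, h⟩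
          exact (Δ.map_rel_iff.mpr hadj).2
      · intro x
        have h1 := hΔ (0, x)
        rw [hop x] at h1
        have h2 : (oplusId ψ : nCopies G n ≃g nCopies G n) (Δ (0, x)) =
            (0, ψ (Δ (0, x)).2) := by
          rw [hpair x]; simp [oplusId]
        rw [h2] at h1
        exact congrArg Prod.snd h1
    · -- Δ maps copy 0 to copy j ≠ 0 : then φ = ψ = id
      have hφ : ∀ x : V, φ x = x := by
        intro x
        have h1 := hΔ (0, x)
        rw [hop x] at h1
        have h2 : (oplusId ψ : nCopies G n ≃g nCopies G n) (Δ (0, x)) = Δ (0, x) := by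
          have : (Δ (0, x)).1 ≠ 0 := by rw [hfst x]; exact hj0
          simp [oplusId, this]
        rw [h2] at h1
        have := Δ.injective h1
        exact (Prod.ext_iff.mp this).2
      have hsymmfst : ∀ y : V, (Δ.symm (0, y)).1 ≠ 0 := by
        intro y h
        have hp : Δ.symm (0, y) = (0, (Δ.symm (0, y)).2) := Prod.ext h rfl
        have h1 : Δ (0, (Δ.symm (0, y)).2) = (0, y) := by
          rw [← hp]; exact Δ.apply_symm_apply _
        have := congrArg Prod.fst h1
        rw [hfst] at this
        exact hj0 this
      have hψ : ∀ x : V, ψ x = x := by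
        intro x
        have h1 := hΔ (Δ.symm (0, x))
        rw [Δ.apply_symm_apply] at h1
        have h2 : (oplusId ψ : nCopies G n ≃g nCopies G n) (0, x) = (0, ψ x) := by
          simp [oplusId]
        rw [h2] at h1
        have h3 : (oplusId φ : nCopies G n ≃g nCopies G n) (Δ.symm (0, x)) =
            Δ.symm (0, x) := by
          simp [oplusId, hsymmfst x]
        rw [h3] at h1
        have h4 : Δ.symm (0, ψ x) = Δ.symm (0, x) := by
          rw [← h1, Δ.symm_apply_apply]
        have := Δ.symm.injective h4
        exact (Prod.ext_iff.mp this).2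
      refine ⟨SimpleGraph.Iso.refl, ?_⟩
      intro x
      simp [hφ x, hψ x]
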